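/- Let η be a Borel probability measure on Γ_T with (e_T)_#η = L^d, and let {γ_y}_{y∈T^d} be a Borel family of paths in Γ_T such that {δ_{γ_y}}_{y∈T^d} is a disintegration of η with respect to e_T and L^d. Define ν := (e_0,e_T)_#η on T^d × T^d, and for (x,y) ∈ T^d × T^d define the measure δ_{x,γ_y} on Γ_T by δ_{x,γ_y} := δ_{γ_y} if γ_y(0) = x and δ_{x,γ_y} := 0 otherwise. Then {δ_{x,γ_y}}_{(x,y)∈T^d×T^d} is a disintegration of η with respect to the map (e_0,e_T) : Γ_T → T^d × T^d and the measure ν. -/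

import Mathlib

open MeasureTheory Set Filter Topology
open scoped ENNReal

noncomputable section

/-- The `d`-dimensional flat torus `ℝ^d/ℤ^d`. -/
abbrev Torus (d : ℕ) : Type := Fin d → AddCircle (1 : ℝ)

/-- Values of vector fields: `ℝ^d` with the Euclidean norm. -/
abbrev Vec (d : ℕ) : Type := EuclideanSpace ℝ (Fin d)

/-- The canonical projection `ℝ^d → 𝕋^d`. -/
def projT (d : ℕ) (x : Vec d) : Torus d := fun i => (x i : AddCircle (1 : ℝ))

/-- The path space `Γ_T = C([0,T]; 𝕋^d)` with the supremum metric. -/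
abbrev PathSpace (T : ℝ) (d : ℕ) : Type := C(Set.Icc (0 : ℝ) T, Torus d)

instance (T : ℝ) (d : ℕ) : MeasurableSpace (PathSpace T d) := borel _
instance (T : ℝ) (d : ℕ) : BorelSpace (PathSpace T d) := ⟨rfl⟩

/-- Extension of a path `γ : [0,T] → 𝕋^d` to all of `ℝ` by projection onto `[0,T]`. -/
def extendPath {T : ℝ} {d : ℕ} (hT : 0 ≤ T) (γ : PathSpace T d) : ℝ → Torus d :=
  fun s => γ (Set.projIcc 0 T hT s)

/-- `γ` is an integral curve of `b`:  `s ↦ b(s,γ(s))` is integrable on `(0,T)` and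
`γ(t) = γ(0) + ∫_0^t b(s,γ(s)) ds` for all `t ∈ [0,T]`, the integral computed in `ℝ^d`
and projected to the torus. -/
def IsIntegralCurveOf {T : ℝ} {d : ℕ} (hT : 0 ≤ T) (b : ℝ → Torus d → Vec d)
    (γ : PathSpace T d) : Prop :=
  MeasureTheory.IntegrableOn (fun s => b s (extendPath hT γ s)) (Set.Ioc 0 T) volume ∧
  ∀ t : Set.Icc (0 : ℝ) T,
    γ t = γ ⟨0, Set.left_mem_Icc.2 hT⟩
      + projT d (∫ s in Set.Ioc (0 : ℝ) (t : ℝ), b s (extendPath hT γ s))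

/-- `η` is concentrated on integral curves of `b`. -/
def ConcentratedOnCurves {T : ℝ} {d : ℕ} (hT : 0 ≤ T) (b : ℝ → Torus d → Vec d)
    (η : Measure (PathSpace T d)) : Prop :=
  ∀ᵐ γ ∂η, IsIntegralCurveOf hT b γ

/-- `{k y}_{y}` is a disintegration of `μ` with respect to `f` and `ν`:
a Borel family of measures, with `k y` concentrated on `f⁻¹(y)` and
`μ(A) = ∫ k y (A) dν(y)` for every Borel set `A`. -/
def IsDisintegration {X Y : Type*} [MeasurableSpace X] [MeasurableSpace Y]
    (μ : Measure X) (f : X → Y) (ν : Measure Y) (k : Y → Measure X) : Prop :=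
  (∀ A : Set X, MeasurableSet A → Measurable fun y => k y A) ∧
  (∀ y : Y, k y ((f ⁻¹' {y})ᶜ) = 0) ∧
  (∀ A : Set X, MeasurableSet A → μ A = ∫⁻ y, k y A ∂ν)

/-- A disintegration consisting of probability measures. -/
def IsProbDisintegration {X Y : Type*} [MeasurableSpace X] [MeasurableSpace Y]
    (μ : Measure X) (f : X → Y) (ν : Measure Y) (k : Y → Measure X) : Prop :=
  (∀ y : Y, IsProbabilityMeasure (k y)) ∧ IsDisintegration μ f ν k


open scoped Classical in
/-- the family `δ_{x,γ_y}` (equal to `δ_{γ_y}` if `γ_y(0) = x` and `0`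
otherwise) is a disintegration of `η` with respect to `(e_0,e_T)` and `ν = (e_0,e_T)_#η`. -/
theorem stmt_10 (T : ℝ) (hT : 0 < T) (d : ℕ)
    (η : Measure (PathSpace T d)) [IsProbabilityMeasure η]
    (heT : Measure.map (fun γ : PathSpace T d => γ ⟨T, Set.right_mem_Icc.2 hT.le⟩) η
      = (volume : Measure (Torus d)))
    (γY : Torus d → PathSpace T d) (hγY : Measurable γY)
    (hdis : IsProbDisintegration η
      (fun γ : PathSpace T d => γ ⟨T, Set.right_mem_Icc.2 hT.le⟩)
      (volume : Measure (Torus d)) (fun y => Measure.dirac (γY y))) :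
    IsDisintegration η
      (fun γ : PathSpace T d =>
        (γ ⟨0, Set.left_mem_Icc.2 hT.le⟩, γ ⟨T, Set.right_mem_Icc.2 hT.le⟩))
      (Measure.map (fun γ : PathSpace T d =>
        (γ ⟨0, Set.left_mem_Icc.2 hT.le⟩, γ ⟨T, Set.right_mem_Icc.2 hT.le⟩)) η)
      (fun p : Torus d × Torus d =>
        if (γY p.2) ⟨0, Set.left_mem_Icc.2 hT.le⟩ = p.1 then Measure.dirac (γY p.2) else 0) := by
  classical
  set t0 : Set.Icc (0:ℝ) T := ⟨0, Set.left_mem_Icc.2 hT.le⟩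
  set tT : Set.Icc (0:ℝ) T := ⟨T, Set.right_mem_Icc.2 hT.le⟩
  have he0 : Measurable (fun γ : PathSpace T d => γ t0) :=
    (ContinuousEvalConst.continuous_eval_const t0).measurable
  have heTm : Measurable (fun γ : PathSpace T d => γ tT) :=
    (ContinuousEvalConst.continuous_eval_const tT).measurable
  have hf : Measurable (fun γ : PathSpace T d => (γ t0, γ tT)) := he0.prodMk heTm
  obtain ⟨hprob, hkm, hconc, hint⟩ := hdis
  -- the kernel applied to a measurable set, as an indicator function
  have hkey : ∀ A : Set (PathSpace T d), MeasurableSet A →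
      Measurable (fun p : Torus d × Torus d =>
        (if (γY p.2) t0 = p.1 then Measure.dirac (γY p.2) else 0) A) := by
    intro A hA
    have hcond : MeasurableSet {p : Torus d × Torus d | (γY p.2) t0 = p.1} := by
      have h1 : StronglyMeasurable (fun p : Torus d × Torus d => (γY p.2) t0) :=
        ((ContinuousEvalConst.continuous_eval_const t0).measurable.comp
          (hγY.comp measurable_snd)).stronglyMeasurable
      exact h1.measurableSet_eq_fun measurable_fst.stronglyMeasurable
    have heq : (fun p : Torus d × Torus d =>
        (if (γY p.2) t0 = p.1 then Measure.dirac (γY p.2) else 0) A)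
        = {p : Torus d × Torus d | (γY p.2) t0 = p.1}.indicator
          (fun p => Measure.dirac (γY p.2) A) := by
      funext p
      by_cases h : (γY p.2) t0 = p.1
      · rw [if_pos h, Set.indicator_of_mem (by exact h)]
      · rw [if_neg h, Set.indicator_of_notMem (by exact h)]; rfl
    rw [heq]
    apply Measurable.indicator _ hcond
    have h2 : (fun p : Torus d × Torus d => Measure.dirac (γY p.2) A)
        = (fun p => A.indicator (1 : PathSpace T d → ℝ≥0∞) (γY p.2)) := by
      funext p; rw [Measure.dirac_apply' _ hA]
    rw [h2]
    exact (measurable_one.indicator hA).comp (hγY.comp measurable_snd)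
  -- every γY y ends at y
  have hend : ∀ y : Torus d, γY y tT = y := by
    intro y
    have h := hconc y
    by_contra hne
    have hmem : γY y ∈ ((fun γ : PathSpace T d => γ tT) ⁻¹' {y})ᶜ := hne
    have hms : MeasurableSet (((fun γ : PathSpace T d => γ tT) ⁻¹' {y})ᶜ) :=
      (heTm (measurableSet_singleton y)).compl
    rw [Measure.dirac_apply' _ hms, Set.indicator_of_mem hmem] at h
    simp at h
  -- η is concentrated on the graph set S
  set S : Set (PathSpace T d) := {γ | γY (γ tT) = γ} with hS_def
  have hSm : MeasurableSet S := by
    have h1 : StronglyMeasurable (fun γ : PathSpace T d => γY (γ tT)) :=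
      (hγY.comp heTm).stronglyMeasurable
    exact h1.measurableSet_eq_fun measurable_id.stronglyMeasurable
  have hSc : η Sᶜ = 0 := by
    rw [hint Sᶜ hSm.compl]
    have hz : ∀ y : Torus d, Measure.dirac (γY y) Sᶜ = 0 := by
      intro y
      rw [Measure.dirac_apply' _ hSm.compl]
      apply Set.indicator_of_notMem
      simp only [Set.mem_compl_iff, hS_def, Set.mem_setOf_eq, not_not]
      rw [hend y]
    simp [hz]
  refine ⟨hkey, ?_, ?_⟩
  · -- concentration
    intro p
    show (if (γY p.2) t0 = p.1 then Measure.dirac (γY p.2) else 0)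
      (((fun γ : PathSpace T d => (γ t0, γ tT)) ⁻¹' {p})ᶜ) = 0
    by_cases h : (γY p.2) t0 = p.1
    · rw [if_pos h]
      have hsp : MeasurableSet ({p} : Set (Torus d × Torus d)) := by
        rw [show ({p} : Set (Torus d × Torus d)) = {p.1} ×ˢ {p.2} by simp]
        exact (measurableSet_singleton p.1).prod (measurableSet_singleton p.2)
      have hms : MeasurableSet (((fun γ : PathSpace T d => (γ t0, γ tT)) ⁻¹' {p})ᶜ) :=
        (hf hsp).compl
      rw [Measure.dirac_apply' _ hms]
      apply Set.indicator_of_notMem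
      simp only [Set.mem_compl_iff, Set.mem_preimage, Set.mem_singleton_iff, not_not]
      exact Prod.ext h (hend p.2)
    · rw [if_neg h]; rfl
  · -- the integral identity
    intro A hA
    rw [MeasureTheory.lintegral_map (hkey A hA) hf]
    have hae : ∀ᵐ γ ∂η,
        (if (γY (γ tT)) t0 = γ t0 then Measure.dirac (γY (γ tT)) else 0) A
          = Measure.dirac γ A := by
      have hSae : ∀ᵐ γ ∂η, γ ∈ S := by
        rw [ae_iff]
        exact hSc
      filter_upwards [hSae] with γ hγ
      have hγ' : γY (γ tT) = γ := hγ
      rw [hγ', if_pos rfl]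
    calc η A = ∫⁻ γ, Measure.dirac γ A ∂η := by
          simp_rw [Measure.dirac_apply' _ hA]
          rw [lintegral_indicator_one hA]
      _ = _ := (lintegral_congr_ae hae).symm
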